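/- Pointwise first variation: let φ₁, φ₂ ∈ Φ and for ε > 0 let K +̌_φ ε·L be defined by φ₁(d(K,u)/λ) + ε φ₂(d(L,u)/λ) = 1. Then for each u ∈ S^{n-1} and 0 ≤ i < n, d/dε |_{ε=0⁺} d(K +̌_φ ε·L, u)^{n-i} = ((n−i)/(φ₁)'_r(1)) · φ₂(d(L,u)/d(K,u)) · d(K,u)^{n-i}. -/

import Mathlib

open MeasureTheory Metric Filter Set

noncomputable section

/-- A star body in `ℝⁿ`: a compact set, star-shaped about the origin, whose radial
function (recorded on the unit sphere) is positive and continuous. -/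
structure StarBody (n : ℕ) where
  carrier : Set (EuclideanSpace ℝ (Fin n))
  radial : sphere (0 : EuclideanSpace ℝ (Fin n)) 1 → ℝ
  radial_pos : ∀ u, 0 < radial u
  radial_continuous : Continuous radial
  isCompact : IsCompact carrier
  mem_iff : ∀ x, x ∈ carrier ↔ x = 0 ∨
    ∃ (u : sphere (0 : EuclideanSpace ℝ (Fin n)) 1) (c : ℝ),
      0 ≤ c ∧ c ≤ radial u ∧ x = c • (u : EuclideanSpace ℝ (Fin n))

/-- The half chord `d(K,u) = (ρ(K,u) + ρ(K,-u))/2` of a star body in direction `u`. -/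
def StarBody.chord {n : ℕ} (K : StarBody n) (u : sphere (0 : EuclideanSpace ℝ (Fin n)) 1) : ℝ :=
  (K.radial u + K.radial (-u)) / 2

/-- Spherical (surface-type) measure on the unit sphere of `ℝⁿ`. -/
def sphereMeasure (n : ℕ) : Measure (sphere (0 : EuclideanSpace ℝ (Fin n)) 1) :=
  (volume : Measure (EuclideanSpace ℝ (Fin n))).toSphere

/-- The chord integral `B_i(K) = (1/n) ∫_{S^{n-1}} d(K,u)^{n-i} dS(u)`. -/
def chordIntegral (n i : ℕ) (K : StarBody n) : ℝ :=
  (1 / (n : ℝ)) * ∫ u, K.chord u ^ ((n : ℝ) - i) ∂(sphereMeasure n)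

/-- `K` and `L` have similar chord: `d(K,·) = λ d(L,·)` for some `λ > 0`. -/
def SimilarChord {n : ℕ} (K L : StarBody n) : Prop :=
  ∃ lam : ℝ, 0 < lam ∧ ∀ u, K.chord u = lam * L.chord u

/-- The class `Φ`: convex, strictly decreasing `φ : [0,∞) → (0,∞]` with `φ(0) = ∞`
(encoded as a blow-up at `0⁺`), `φ(∞) = 0` and `φ(1) = 1`. -/
structure OrliczPhi where
  toFun : ℝ → ℝ
  pos : ∀ x > (0 : ℝ), 0 < toFun x
  convexOn : ConvexOn ℝ (Set.Ioi 0) toFun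
  strictAnti : StrictAntiOn toFun (Set.Ioi 0)
  tendsto_zero : Tendsto toFun (nhdsWithin 0 (Set.Ioi 0)) atTop
  tendsto_atTop : Tendsto toFun atTop (nhds 0)
  map_one : toFun 1 = 1

/-- Pointwise first variation: for each `u`,
`d/dε|_{ε=0⁺} d(K +̌_φ ε·L, u)^{n−i}
  = ((n−i)/(φ₁)'_r(1)) φ₂(d(L,u)/d(K,u)) d(K,u)^{n−i}`. -/
lemma aux_deriv (φ₁ φ₂ : OrliczPhi) (a b p : ℝ) (ha : 0 < a) (hb : 0 < b)
    (f : ℝ → ℝ) (hfpos : ∀ ε, 0 < f ε) (hf0 : f 0 = a)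
    (heq : ∀ ε > (0:ℝ), φ₁.toFun (a / f ε) + ε * φ₂.toFun (b / f ε) = 1)
    (dr : ℝ) (hd : HasDerivWithinAt φ₁.toFun dr (Set.Ici 1) 1) (hdr : dr ≠ 0) :
    HasDerivWithinAt (fun ε => f ε ^ p) ((p / dr) * φ₂.toFun (b / a) * a ^ p)
      (Set.Ioi 0) 0 := by
  have hCpos : 0 < φ₂.toFun (b / a) := φ₂.pos _ (div_pos hb ha)
  set C : ℝ := φ₂.toFun (b / a) with hC_def
  have hφ1_2 : φ₁.toFun 2 < 1 := by
    have := φ₁.strictAnti (Set.mem_Ioi.mpr one_pos) (Set.mem_Ioi.mpr two_pos) one_lt_two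
    rwa [φ₁.map_one] at this
  set δ : ℝ := 1 - φ₁.toFun 2 with hδ_def
  have hδ : 0 < δ := by rw [hδ_def]; linarith
  have hXpos : ∀ ε : ℝ, 0 < ε → 0 < φ₂.toFun (b / f ε) :=
    fun ε hε => φ₂.pos _ (div_pos hb (hfpos ε))
  have hφlt : ∀ ε : ℝ, 0 < ε → φ₁.toFun (a / f ε) < 1 := by
    intro ε hε
    have h1 := heq ε hε
    nlinarith [hXpos ε hε]
  have ht1 : ∀ ε : ℝ, 0 < ε → 1 < a / f ε := by
    intro ε hε
    by_contra h
    push_neg at h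
    rcases eq_or_lt_of_le h with h1 | h1
    · have hc := hφlt ε hε
      rw [h1, φ₁.map_one] at hc
      exact lt_irrefl 1 hc
    · have := φ₁.strictAnti (Set.mem_Ioi.mpr (div_pos ha (hfpos ε))) (Set.mem_Ioi.mpr one_pos) h1
      rw [φ₁.map_one] at this
      linarith [hφlt ε hε]
  have hfa : ∀ ε : ℝ, 0 < ε → f ε < a := fun ε hε =>
    (one_lt_div (hfpos ε)).mp (ht1 ε hε)
  have hXle : ∀ ε : ℝ, 0 < ε → φ₂.toFun (b / f ε) ≤ C := by
    intro ε hε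
    have hlt : b / a < b / f ε := div_lt_div_of_pos_left hb (hfpos ε) (hfa ε hε)
    have := φ₂.strictAnti (Set.mem_Ioi.mpr (div_pos hb ha))
      (Set.mem_Ioi.mpr (div_pos hb (hfpos ε))) hlt
    rw [hC_def]
    linarith
  have hkey : ∀ ε : ℝ, 0 < ε → ε * C < δ → a / f ε ≤ 1 + ε * C / δ := by
    intro ε hε hεδ
    have h1 := ht1 ε hε
    have hX := hXpos ε hε
    have hXC := hXle ε hε
    have heqε := heq ε hε
    have hmul : ε * φ₂.toFun (b / f ε) ≤ ε * C := mul_le_mul_of_nonneg_left hXC hε.le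
    have hlt2 : a / f ε < 2 := by
      by_contra h
      push_neg at h
      have h2 : φ₁.toFun (a / f ε) ≤ φ₁.toFun 2 := by
        rcases eq_or_lt_of_le h with h2 | h2
        · rw [← h2]
        · exact le_of_lt (φ₁.strictAnti (Set.mem_Ioi.mpr two_pos)
            (Set.mem_Ioi.mpr (by linarith)) h2)
      rw [hδ_def] at hεδ
      linarith
    have hsec := φ₁.convexOn.secant_mono (Set.mem_Ioi.mpr one_pos)
      (Set.mem_Ioi.mpr (by linarith : (0:ℝ) < a / f ε)) (Set.mem_Ioi.mpr two_pos)
      (ne_of_gt h1) (by norm_num) hlt2.le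
    rw [φ₁.map_one] at hsec
    have hden : (0:ℝ) < a / f ε - 1 := by linarith
    rw [div_le_div_iff₀ hden (by norm_num : (0:ℝ) < 2 - 1)] at hsec
    rw [← sub_le_iff_le_add', le_div_iff₀ hδ]
    rw [hδ_def]
    nlinarith
  have hIoo : Set.Ioo (0:ℝ) (δ / C) ∈ nhdsWithin (0:ℝ) (Set.Ioi 0) :=
    Ioo_mem_nhdsGT_of_mem ⟨le_refl 0, div_pos hδ hCpos⟩
  have hself : Set.Ioi (0:ℝ) ∈ nhdsWithin (0:ℝ) (Set.Ioi 0) := self_mem_nhdsWithin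
  have ht_tendsto : Tendsto (fun ε => a / f ε) (nhdsWithin 0 (Set.Ioi 0)) (nhds 1) := by
    have hup : Tendsto (fun ε : ℝ => 1 + ε * C / δ) (nhds (0:ℝ)) (nhds 1) := by
      have hcont : Continuous (fun ε : ℝ => 1 + ε * C / δ) := by continuity
      simpa using hcont.tendsto 0
    refine tendsto_of_tendsto_of_tendsto_of_le_of_le' tendsto_const_nhds
      (hup.mono_left nhdsWithin_le_nhds) ?_ ?_
    · filter_upwards [hself] with ε hε
      exact (ht1 ε hε).le
    · filter_upwards [hIoo] with ε hε
      exact hkey ε hε.1 ((lt_div_iff₀ hCpos).mp hε.2)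
  have ht_tendsto' : Tendsto (fun ε => a / f ε) (nhdsWithin 0 (Set.Ioi 0))
      (nhdsWithin 1 (Set.Ioi 1)) := by
    rw [tendsto_nhdsWithin_iff]
    exact ⟨ht_tendsto, by filter_upwards [hself] with ε hε using ht1 ε hε⟩
  have hf_tendsto : Tendsto f (nhdsWithin 0 (Set.Ioi 0)) (nhds a) := by
    have h1 : Tendsto (fun ε => a / (a / f ε)) (nhdsWithin 0 (Set.Ioi 0)) (nhds a) := by
      have := (tendsto_const_nhds (x := a) (f := nhdsWithin (0:ℝ) (Set.Ioi 0))).div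
        ht_tendsto one_ne_zero
      simpa [Pi.div_def] using this
    apply h1.congr'
    filter_upwards [hself] with ε hε
    have h2 : f ε ≠ 0 := (hfpos ε).ne'
    field_simp
  have hφ2_tendsto : Tendsto (fun ε => φ₂.toFun (b / f ε)) (nhdsWithin 0 (Set.Ioi 0)) (nhds C) := by
    have hcont : ContinuousWithinAt φ₂.toFun (Set.Ioi 0) (b / a) := by
      have h := φ₂.convexOn.continuousOn_interior
      rw [interior_Ioi] at h
      exact h.continuousWithinAt (Set.mem_Ioi.mpr (div_pos hb ha))
    apply hcont.tendsto.comp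
    rw [tendsto_nhdsWithin_iff]
    exact ⟨tendsto_const_nhds.div hf_tendsto ha.ne',
      Filter.Eventually.of_forall fun ε => Set.mem_Ioi.mpr (div_pos hb (hfpos ε))⟩
  have hslope := hasDerivWithinAt_iff_tendsto_slope.mp hd
  rw [Set.Ici_sdiff_left] at hslope
  have hs_tendsto : Tendsto (fun ε => slope φ₁.toFun 1 (a / f ε)) (nhdsWithin 0 (Set.Ioi 0))
      (nhds dr) := hslope.comp ht_tendsto'
  have hdr_neg : dr < 0 := by
    have hle : dr ≤ 0 := by
      refine le_of_tendsto hslope ?_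
      filter_upwards [self_mem_nhdsWithin] with x hx
      have hx1 : (1:ℝ) < x := hx
      have hxlt : φ₁.toFun x < 1 := by
        have := φ₁.strictAnti (Set.mem_Ioi.mpr one_pos) (Set.mem_Ioi.mpr (by linarith)) hx1
        rwa [φ₁.map_one] at this
      rw [slope_def_field, φ₁.map_one]
      apply div_nonpos_of_nonpos_of_nonneg <;> linarith
    exact lt_of_le_of_ne hle hdr
  have hfd : HasDerivWithinAt f (a * C / dr) (Set.Ioi 0) 0 := by
    rw [hasDerivWithinAt_iff_tendsto_slope' (by simp : (0:ℝ) ∉ Set.Ioi 0)]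
    have hg_tendsto : Tendsto
        (fun ε => a * φ₂.toFun (b / f ε) / (slope φ₁.toFun 1 (a / f ε) * (a / f ε)))
        (nhdsWithin 0 (Set.Ioi 0)) (nhds (a * C / dr)) := by
      have h1 := (tendsto_const_nhds (x := a) (f := nhdsWithin (0:ℝ) (Set.Ioi 0))).mul hφ2_tendsto
      have h2 := hs_tendsto.mul ht_tendsto
      have h3 := h1.div h2 (by simpa using hdr_neg.ne)
      simpa [Pi.div_def] using h3
    apply hg_tendsto.congr'
    filter_upwards [hself] with ε hε
    have hX := hXpos ε hε
    have ht := ht1 ε hε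
    have hfε := hfpos ε
    have heqε := heq ε hε
    have hsl : slope φ₁.toFun 1 (a / f ε) = -(ε * φ₂.toFun (b / f ε)) / (a / f ε - 1) := by
      rw [slope_def_field, φ₁.map_one]
      have hq : φ₁.toFun (a / f ε) = 1 - ε * φ₂.toFun (b / f ε) := by linarith
      rw [hq]; ring
    rw [hsl, slope_def_field, hf0, sub_zero]
    have htne : a / f ε - 1 ≠ 0 := by linarith
    have hεne : ε ≠ 0 := ne_of_gt hε
    have hfne : f ε ≠ 0 := hfε.ne'
    have hXne : φ₂.toFun (b / f ε) ≠ 0 := hX.ne'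
    field_simp
    ring
  have hpow : HasDerivAt (fun x : ℝ => x ^ p) (p * a ^ (p - 1)) a :=
    Real.hasDerivAt_rpow_const (Or.inl ha.ne')
  rw [← hf0] at hpow
  have hcomp := hpow.comp_hasDerivWithinAt 0 hfd
  rw [hf0] at hcomp
  convert hcomp using 1
  · rfl
  · rfl
  · rfl
  rw [Real.rpow_sub ha, Real.rpow_one]
  field_simp

theorem chord_pow_first_variation {n i : ℕ} (hi : i < n) (φ₁ φ₂ : OrliczPhi)
    (K L : StarBody n) (M : ℝ → StarBody n) (hM0 : M 0 = K)
    (hM : ∀ ε > (0 : ℝ), ∀ u,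
      φ₁.toFun (K.chord u / (M ε).chord u) + ε * φ₂.toFun (L.chord u / (M ε).chord u) = 1)
    (dr : ℝ) (hd : HasDerivWithinAt φ₁.toFun dr (Set.Ici 1) 1) (hdr : dr ≠ 0)
    (u : sphere (0 : EuclideanSpace ℝ (Fin n)) 1) :
    HasDerivWithinAt (fun ε => (M ε).chord u ^ ((n : ℝ) - i))
      ((((n : ℝ) - i) / dr) * φ₂.toFun (L.chord u / K.chord u) * K.chord u ^ ((n : ℝ) - i))
      (Set.Ioi 0) 0 := by
  have chord_pos : ∀ (J : StarBody n), 0 < J.chord u := by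
    intro J
    have h1 := J.radial_pos u
    have h2 := J.radial_pos (-u)
    unfold StarBody.chord
    linarith
  exact aux_deriv φ₁ φ₂ (K.chord u) (L.chord u) ((n : ℝ) - i) (chord_pos K) (chord_pos L)
    (fun ε => (M ε).chord u) (fun ε => chord_pos (M ε)) (by simp [hM0])
    (fun ε hε => hM ε hε u) dr hd hdr
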